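/- arXiv:1801.00827 — 9 statements merged into one kernel-verified Lean document; each statement's English description precedes it below -/
import Mathlib

section
/- Proposition (orbit description of MPS, Proposition 5.1/2.4(2)): Let K be a field, q > 1 an integer, and 𝔞 = (a_1,…,a_q), 𝔟 = (b_1,…,b_q) tuples of positive integers (with a_{q+1} = a_1). A tensor T (with T(i_1,…,i_q) ∈ K for i_j ∈ Fin b_j) lies in MPS(𝔞,𝔟,q) if and only if there exist linear maps f_j : Matrix (Fin a_j) (Fin a_{j+1}) K →ₗ[K] (Fin b_j → K), j = 1,…,q, such that for all multi-indices, T(i_1,…,i_q) = ∑_{p_1 ∈ Fin a_1, …, p_q ∈ Fin a_q} ∏_{j=1}^{q} (f_j (stdBasisMatrix (p_j) (p_{j+1}) 1)) (i_j), i.e. MPS(𝔞,𝔟,q) is exactly the set of tensors (f_1 ⊗ ⋯ ⊗ f_q)(𝔐_{a_1,…,a_q}) where 𝔐_{a_1,…,a_q} = ∑_p e_{p_1 p_2} ⊗ ⋯ ⊗ e_{p_q p_1} is the iterated matrix multiplication tensor. -/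
/-- Proposition 2.4(2) / 5.1(2): orbit description of MPS.
A tensor `T` lies in `MPS(𝔞,𝔟,q)` (i.e. is given by traces of cyclic products
`M_{i_1,1} ⋯ M_{i_q,q}`, written entrywise as
`∑_p ∏_j (M_{i_j,j})_{p_j, p_{j+1}}`) if and only if it is of the form
`(f_1 ⊗ ⋯ ⊗ f_q)(𝔐_{a_1,…,a_q})` for linear maps `f_j : K^{a_j × a_{j+1}} → K^{b_j}`. -/
theorem mps_eq_orbit_of_matrix_multiplication_tensor
    (K : Type*) [Field K] (q : ℕ) [NeZero q] (hq : 1 < q)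
    (a b : Fin q → ℕ) (ha : ∀ j, 0 < a j) (hb : ∀ j, 0 < b j)
    (T : ((j : Fin q) → Fin (b j)) → K) :
    (∃ M : (j : Fin q) → Fin (b j) → Matrix (Fin (a j)) (Fin (a (j + 1))) K,
      ∀ i : (j : Fin q) → Fin (b j),
        T i = ∑ p : (j : Fin q) → Fin (a j), ∏ j : Fin q, M j (i j) (p j) (p (j + 1))) ↔
    (∃ f : (j : Fin q) → (Matrix (Fin (a j)) (Fin (a (j + 1))) K →ₗ[K] (Fin (b j) → K)),
      ∀ i : (j : Fin q) → Fin (b j),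
        T i = ∑ p : (j : Fin q) → Fin (a j),
          ∏ j : Fin q, f j (Matrix.single (p j) (p (j + 1)) 1) (i j)) := by
  constructor
  · rintro ⟨M, hM⟩
    refine ⟨fun j => { toFun := (fun A i => ∑ r, ∑ s, A r s * M j i r s)
                       map_add' := by intro A B; funext i; simp [add_mul, Finset.sum_add_distrib]
                       map_smul' := by intro c A; funext i; simp [Finset.mul_sum, mul_assoc] }, ?_⟩
    intro i
    rw [hM i]
    refine Finset.sum_congr rfl fun p _ => Finset.prod_congr rfl fun j _ => ?_
    simp only [LinearMap.coe_mk, AddHom.coe_mk, Matrix.single, Matrix.of_apply, ite_mul, one_mul, zero_mul]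
    rw [Finset.sum_eq_single (p j)]
    · rw [Finset.sum_eq_single (p (j + 1))] <;> simp +contextual [eq_comm]
    · intro r _ hr
      simp [Ne.symm hr]
    · simp
  · rintro ⟨f, hf⟩
    exact ⟨fun j i => Matrix.of fun p r => f j (Matrix.single p r 1) i, hf⟩
end

section
/- Lemma (limit point in the proof of Theorem 4.4): For t ∈ ℂ, t ≠ 0, define four 2×2 complex matrices A_1(t) = t·E_{11}, A_2(t) = (1+t)·E_{12}, A_3(t) = t·E_{21}, A_4(t) = t·E_{22}, where E_{pq} is the standard matrix unit, and let T_t : (Fin 3 → Fin 4) → ℂ be the tensor T_t(i_1,i_2,i_3) = trace(A_{i_1}(t) A_{i_2}(t) A_{i_3}(t)), so T_t ∈ IMPS(2,4,3). Then (1/t²)·T_t converges, as t → 0, to the tensor D defined by D(i_1,i_2,i_3) = 1 if (i_1,i_2,i_3) ∈ {(1,2,3),(3,1,2),(2,3,1),(4,3,2),(2,4,3),(3,2,4)} and D(i_1,i_2,i_3) = 0 otherwise (indices in {1,2,3,4}). In particular D lies in the closure of IMPS(2,4,3). -/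
open Matrix

/-- The path of 4-tuples of `2 × 2` matrices from the proof of Theorem 4.4:
`A_1(t) = t·E₁₁`, `A_2(t) = (1+t)·E₁₂`, `A_3(t) = t·E₂₁`, `A_4(t) = t·E₂₂`
(here written with `0`-based indices). -/
noncomputable def hackbuschPath (t : ℂ) : Fin 4 → Matrix (Fin 2) (Fin 2) ℂ :=
  ![t • Matrix.single 0 0 1, (1 + t) • Matrix.single 0 1 1,
    t • Matrix.single 1 0 1, t • Matrix.single 1 1 1]

/-- The limit tensor `D` from the proof of Theorem 4.4, with
`D(i₁,i₂,i₃) = 1` exactly for the (1-based) index triples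
`(1,2,3),(3,1,2),(2,3,1),(4,3,2),(2,4,3),(3,2,4)` (here written 0-based). -/
noncomputable def hackbuschTensor : (Fin 3 → Fin 4) → ℂ := fun i =>
  if (i 0, i 1, i 2) ∈
      ({(0, 1, 2), (2, 0, 1), (1, 2, 0), (3, 2, 1), (1, 3, 2), (2, 1, 3)} :
        Finset (Fin 4 × Fin 4 × Fin 4)) then 1 else 0

lemma hackbuschPath_eq (t : ℂ) : hackbuschPath t =
    ![!![t,0;0,0], !![0,1+t;0,0], !![0,0;t,0], !![0,0;0,t]] := by
  funext k
  fin_cases k <;> · ext i j; fin_cases i <;> fin_cases j <;>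
    simp [hackbuschPath, Matrix.single]

/-- Auxiliary error tensor: indicator of `(0,0,0)` and `(3,3,3)`. -/
noncomputable def hackbuschErr : (Fin 3 → Fin 4) → ℂ := fun i =>
  if (i 0, i 1, i 2) ∈ ({((0:Fin 4), (0:Fin 4), (0:Fin 4)), (3, 3, 3)} :
      Finset (Fin 4 × Fin 4 × Fin 4)) then 1 else 0

set_option maxHeartbeats 1000000 in
lemma hackbusch_trace_eq (t : ℂ) (a b c : Fin 4) :
    Matrix.trace (hackbuschPath t a * hackbuschPath t b * hackbuschPath t c) =
      t ^ 2 * (1 + t) *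
        (if (a, b, c) ∈ ({(0, 1, 2), (2, 0, 1), (1, 2, 0), (3, 2, 1), (1, 3, 2), (2, 1, 3)} :
            Finset (Fin 4 × Fin 4 × Fin 4)) then 1 else 0) +
      t ^ 3 * (if (a, b, c) ∈ ({((0:Fin 4), (0:Fin 4), (0:Fin 4)), (3, 3, 3)} :
            Finset (Fin 4 × Fin 4 × Fin 4)) then 1 else 0) := by
  fin_cases a <;> fin_cases b <;> fin_cases c <;>
    · simp only [Finset.mem_insert, Finset.mem_singleton, Prod.mk.injEq, Fin.ext_iff]
      norm_num [hackbuschPath_eq, Matrix.mul_fin_two, Matrix.trace_fin_two,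
        show ((3:Fin 4):ℕ) = 3 from rfl]
      try ring
      try tauto

/-- Lemma (limit point in the proof of Theorem 4.4): as `t → 0` (with `t ≠ 0`),
the scaled tensors `(1/t²)·T_t`, where
`T_t(i₁,i₂,i₃) = trace(A_{i₁}(t) A_{i₂}(t) A_{i₃}(t)) ∈ IMPS(2,4,3)`,
converge to the tensor `D`; in particular `D` lies in the closure of `IMPS(2,4,3)`. -/
theorem tendsto_hackbuschTensor_and_mem_closure_imps :
    Filter.Tendsto
      (fun t : ℂ => fun i : Fin 3 → Fin 4 =>
        (1 / t ^ 2) *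
          Matrix.trace (hackbuschPath t (i 0) * hackbuschPath t (i 1) * hackbuschPath t (i 2)))
      (nhdsWithin 0 {0}ᶜ) (nhds hackbuschTensor) ∧
    hackbuschTensor ∈ closure {T : (Fin 3 → Fin 4) → ℂ |
      ∃ M : Fin 4 → Matrix (Fin 2) (Fin 2) ℂ,
        ∀ i : Fin 3 → Fin 4, T i = Matrix.trace (M (i 0) * M (i 1) * M (i 2))} := by
  set G : ℂ → (Fin 3 → Fin 4) → ℂ :=
    fun t i => (1 + t) * hackbuschTensor i + t * hackbuschErr i with hG
  have hGcont : Continuous G := by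
    apply continuous_pi
    intro i
    fun_prop
  have hG0 : G 0 = hackbuschTensor := by
    funext i; simp [hG]
  have heq : (fun t : ℂ => fun i : Fin 3 → Fin 4 =>
      (1 / t ^ 2) *
        Matrix.trace (hackbuschPath t (i 0) * hackbuschPath t (i 1) * hackbuschPath t (i 2)))
      =ᶠ[nhdsWithin 0 {0}ᶜ] G := by
    filter_upwards [self_mem_nhdsWithin] with t ht
    have ht' : t ≠ 0 := ht
    funext i
    rw [hackbusch_trace_eq, hG]
    show _ = (1 + t) * hackbuschTensor i + t * hackbuschErr i
    rw [hackbuschTensor, hackbuschErr]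
    split_ifs <;> field_simp <;> ring
  have htend : Filter.Tendsto
      (fun t : ℂ => fun i : Fin 3 → Fin 4 =>
        (1 / t ^ 2) *
          Matrix.trace (hackbuschPath t (i 0) * hackbuschPath t (i 1) * hackbuschPath t (i 2)))
      (nhdsWithin 0 {0}ᶜ) (nhds hackbuschTensor) := by
    refine Filter.Tendsto.congr' heq.symm ?_
    have := (hGcont.tendsto 0).mono_left (nhdsWithin_le_nhds (s := {0}ᶜ))
    rwa [hG0] at this
  refine ⟨htend, ?_⟩
  refine mem_closure_of_tendsto htend ?_
  filter_upwards [self_mem_nhdsWithin] with t ht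
  have ht' : t ≠ 0 := ht
  obtain ⟨c, hc⟩ := IsAlgClosed.exists_pow_nat_eq (1 / t ^ 2 : ℂ) (n := 3) (by norm_num)
  refine ⟨fun j => c • hackbuschPath t j, fun i => ?_⟩
  simp only [Matrix.smul_mul, Matrix.mul_smul, Matrix.trace_smul, smul_smul, smul_eq_mul]
  rw [← hc]; ring
end

section
/- Theorem (Theorem 4.4, second part): Let D : (Fin 3 → Fin 4) → ℂ be the tensor with D(i_1,i_2,i_3) = 1 if (i_1,i_2,i_3) ∈ {(1,2,3),(3,1,2),(2,3,1),(4,3,2),(2,4,3),(3,2,4)} and D(i_1,i_2,i_3) = 0 otherwise (indices in {1,2,3,4}). Then D does not lie in MPS((2,2,2),(4,4,4),3); that is, there do NOT exist 2×2 complex matrices M_{i,1}, M_{i,2}, M_{i,3} (i = 1,…,4) with D(i_1,i_2,i_3) = trace(M_{i_1,1} M_{i_2,2} M_{i_3,3}) for all indices. -/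
/-- Theorem 4.4 (second part): the tensor `D` does not lie in
`MPS((2,2,2),(4,4,4),3)`. -/
theorem hackbuschTensor_not_mem_mps :
    ¬ ∃ M₁ M₂ M₃ : Fin 4 → Matrix (Fin 2) (Fin 2) ℂ,
      ∀ i : Fin 3 → Fin 4,
        hackbuschTensor i = Matrix.trace (M₁ (i 0) * M₂ (i 1) * M₃ (i 2)) := by
  rintro ⟨A, B, C, h⟩
  -- The basic trace evaluations, in associativity-friendly form.
  have hval : ∀ a b c : Fin 4, Matrix.trace (A a * (B b * C c)) =
      if (a, b, c) ∈
        ({(0, 1, 2), (2, 0, 1), (1, 2, 0), (3, 2, 1), (1, 3, 2), (2, 1, 3)} :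
          Finset (Fin 4 × Fin 4 × Fin 4)) then 1 else 0 := by
    intro a b c
    have h' := h ![a, b, c]
    simp only [hackbuschTensor, Matrix.cons_val_zero, Matrix.cons_val_one, Matrix.head_cons,
      Matrix.cons_val_two, Matrix.tail_cons] at h'
    rw [← mul_assoc]
    exact h'.symm
  -- The `A i` are linearly independent.
  have keyA : LinearIndependent ℂ A := by
    rw [Fintype.linearIndependent_iff]
    intro g hg
    have tr0 : ∀ W : Matrix (Fin 2) (Fin 2) ℂ,
        ∑ i, g i * Matrix.trace (A i * W) = 0 := by
      intro W
      have h2 := congrArg (fun X => Matrix.trace (X * W)) hg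
      simpa [Finset.sum_mul, smul_mul_assoc, Matrix.trace_smul, smul_eq_mul] using h2
    intro m
    fin_cases m
    · have := tr0 (B 1 * C 2); simpa [Fin.sum_univ_four, hval] using this
    · have := tr0 (B 2 * C 0); simpa [Fin.sum_univ_four, hval] using this
    · have := tr0 (B 0 * C 1); simpa [Fin.sum_univ_four, hval] using this
    · have := tr0 (B 2 * C 1); simpa [Fin.sum_univ_four, hval] using this
  -- The `B j` are linearly independent.
  have keyB : LinearIndependent ℂ B := by
    rw [Fintype.linearIndependent_iff]
    intro g hg
    have tr0 : ∀ a c : Fin 4,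
        ∑ j, g j * Matrix.trace (A a * (B j * C c)) = 0 := by
      intro a c
      have h2 := congrArg (fun X => Matrix.trace (A a * (X * C c))) hg
      simpa [Finset.sum_mul, Matrix.mul_sum, smul_mul_assoc, mul_smul_comm,
        Matrix.trace_smul, smul_eq_mul] using h2
    intro m
    fin_cases m
    · have := tr0 2 1; simpa [Fin.sum_univ_four, hval] using this
    · have := tr0 0 2; simpa [Fin.sum_univ_four, hval] using this
    · have := tr0 1 0; simpa [Fin.sum_univ_four, hval] using this
    · have := tr0 1 2; simpa [Fin.sum_univ_four, hval] using this
  have cardeq : Fintype.card (Fin 4) = Module.finrank ℂ (Matrix (Fin 2) (Fin 2) ℂ) := by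
    simp [Module.finrank_matrix]
  -- Since the `A i` form a basis and the trace form is nondegenerate,
  -- a matrix with vanishing traces against all `A i` is zero.
  have hzero : ∀ X : Matrix (Fin 2) (Fin 2) ℂ,
      (∀ i, Matrix.trace (A i * X) = 0) → X = 0 := by
    intro X hX
    have hY : ∀ Y : Matrix (Fin 2) (Fin 2) ℂ, Matrix.trace (Y * X) = 0 := by
      intro Y
      set bA := basisOfLinearIndependentOfCardEqFinrank keyA cardeq with hbAdef
      have hbA : ⇑bA = A := coe_basisOfLinearIndependentOfCardEqFinrank keyA cardeq
      conv_lhs => rw [← bA.sum_repr Y]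
      simp [hbA, Finset.sum_mul, smul_mul_assoc, Matrix.trace_smul, hX]
    ext a b
    fin_cases a <;> fin_cases b
    · have := hY (Matrix.single 0 0 1)
      simpa [Matrix.trace_fin_two] using this
    · have := hY (Matrix.single 1 0 1)
      simpa [Matrix.trace_fin_two] using this
    · have := hY (Matrix.single 0 1 1)
      simpa [Matrix.trace_fin_two] using this
    · have := hY (Matrix.single 1 1 1)
      simpa [Matrix.trace_fin_two] using this
  -- Hence `B j * C 3 = 0` for `j ∈ {0, 2, 3}`.
  have hb0 : B 0 * C 3 = 0 := by
    apply hzero; intro i; rw [hval]; fin_cases i <;> simp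
  have hb2 : B 2 * C 3 = 0 := by
    apply hzero; intro i; rw [hval]; fin_cases i <;> simp
  have hb3 : B 3 * C 3 = 0 := by
    apply hzero; intro i; rw [hval]; fin_cases i <;> simp
  -- The `B j` form a basis, so `X * C 3` is always a multiple of `B 1 * C 3`.
  set bB := basisOfLinearIndependentOfCardEqFinrank keyB cardeq with hbBdef
  have hbB : ⇑bB = B := coe_basisOfLinearIndependentOfCardEqFinrank keyB cardeq
  have hdecomp : ∀ X : Matrix (Fin 2) (Fin 2) ℂ,
      X * C 3 = bB.repr X 1 • (B 1 * C 3) := by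
    intro X
    conv_lhs => rw [← bB.sum_repr X]
    simp [hbB, Finset.sum_mul, add_mul, smul_mul_assoc, Fin.sum_univ_four, hb0, hb2, hb3]
  by_cases hC : C 3 = 0
  · -- contradicts `tr(A 2 * B 1 * C 3) = 1`
    have h1 : Matrix.trace (A 2 * (B 1 * C 3)) = 1 := by
      rw [hval]; simp
    rw [hC] at h1
    simp at h1
  · -- `C 3 ≠ 0`, pick a nonzero entry
    obtain ⟨p, q, hpq⟩ : ∃ p q, C 3 p q ≠ 0 := by
      by_contra hcon
      push_neg at hcon
      exact hC (by ext p q; simp [hcon])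
    have h0 := hdecomp (Matrix.single 0 p 1)
    have h1 := hdecomp (Matrix.single 1 p 1)
    have e00 := congrFun (congrFun h0 0) q
    have e01 := congrFun (congrFun h0 1) q
    have e11 := congrFun (congrFun h1 1) q
    simp [Matrix.smul_apply, smul_eq_mul] at e00 e01 e11
    -- e00 : C 3 p q = r0 * (B 1 * C 3) 0 q
    -- e01 : 0 = r0 * (B 1 * C 3) 1 q
    -- e11 : C 3 p q = r1 * (B 1 * C 3) 1 q
    have hr0 : bB.repr (Matrix.single 0 p 1) 1 ≠ 0 := by
      intro hz
      rw [hz, zero_mul] at e00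
      exact hpq e00
    have hN1 : (B 1 * C 3) 1 q = 0 := by
      rcases e01 with hz | hz
      · exact absurd hz hr0
      · exact hz
    rw [hN1, mul_zero] at e11
    exact hpq e11
end

section
/- Lemma (intermediate claim in the proof of Theorem 4.4): Let D : (Fin 3 → Fin 4) → ℂ be the tensor with D(i_1,i_2,i_3) = 1 if (i_1,i_2,i_3) ∈ {(1,2,3),(3,1,2),(2,3,1),(4,3,2),(2,4,3),(3,2,4)} and 0 otherwise (indices in {1,2,3,4}). Suppose M_{i,1}, M_{i,2}, M_{i,3} (i = 1,…,4) are 2×2 complex matrices satisfying D(i_1,i_2,i_3) = trace(M_{i_1,1} M_{i_2,2} M_{i_3,3}) for all indices. Then for each j ∈ {1,2,3}, the four matrices M_{1,j}, M_{2,j}, M_{3,j}, M_{4,j} are linearly independent, i.e. they span the 4-dimensional space Matrix (Fin 2) (Fin 2) ℂ (equivalently, the associated linear maps L_j : Matrix (Fin 2) (Fin 2) ℂ → ℂ⁴ are isomorphisms). -/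
/-- Intermediate claim in the proof of Theorem 4.4: if the tensor `D` is represented
as an MPS by matrices `M_{i,j}` (`j = 1,2,3`, `i = 1,…,4`), then for each `j` the four
matrices `M_{1,j},…,M_{4,j}` are linearly independent (equivalently, they span the
4-dimensional space of `2 × 2` matrices, i.e. the associated linear maps
`L_j : ℂ^{2×2} → ℂ⁴` are isomorphisms). -/
theorem mps_representation_of_hackbuschTensor_linearIndependent
    (M₁ M₂ M₃ : Fin 4 → Matrix (Fin 2) (Fin 2) ℂ)
    (h : ∀ i : Fin 3 → Fin 4,
      hackbuschTensor i = Matrix.trace (M₁ (i 0) * M₂ (i 1) * M₃ (i 2))) :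
    LinearIndependent ℂ M₁ ∧ LinearIndependent ℂ M₂ ∧ LinearIndependent ℂ M₃ := by
  have key : ∀ i a b : Fin 4,
      Matrix.trace (M₁ i * M₂ a * M₃ b) = hackbuschTensor ![i, a, b] := by
    intro i a b
    have := h ![i, a, b]
    simpa using this.symm
  refine ⟨?_, ?_, ?_⟩
  · rw [Fintype.linearIndependent_iff]
    intro g hg
    have t : ∀ a b : Fin 4, ∑ i : Fin 4, g i * hackbuschTensor ![i, a, b] = 0 := by
      intro a b
      have h0 : Matrix.trace ((∑ i : Fin 4, g i • M₁ i) * M₂ a * M₃ b) = 0 := by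
        rw [hg]; simp
      rw [Finset.sum_mul, Finset.sum_mul, Matrix.trace_sum] at h0
      simpa [Matrix.smul_mul, Matrix.trace_smul, smul_eq_mul, key] using h0
    intro i
    fin_cases i
    · simpa [hackbuschTensor, Fin.sum_univ_four] using t 1 2
    · simpa [hackbuschTensor, Fin.sum_univ_four] using t 2 0
    · simpa [hackbuschTensor, Fin.sum_univ_four] using t 0 1
    · simpa [hackbuschTensor, Fin.sum_univ_four] using t 2 1
  · rw [Fintype.linearIndependent_iff]
    intro g hg
    have t : ∀ a b : Fin 4, ∑ i : Fin 4, g i * hackbuschTensor ![a, i, b] = 0 := by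
      intro a b
      have h0 : Matrix.trace (M₁ a * (∑ i : Fin 4, g i • M₂ i) * M₃ b) = 0 := by
        rw [hg]; simp
      rw [Finset.mul_sum, Finset.sum_mul, Matrix.trace_sum] at h0
      simpa [Matrix.mul_smul, Matrix.smul_mul, Matrix.trace_smul, smul_eq_mul, key] using h0
    intro i
    fin_cases i
    · simpa [hackbuschTensor, Fin.sum_univ_four] using t 2 1
    · simpa [hackbuschTensor, Fin.sum_univ_four] using t 0 2
    · simpa [hackbuschTensor, Fin.sum_univ_four] using t 1 0
    · simpa [hackbuschTensor, Fin.sum_univ_four] using t 1 2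
  · rw [Fintype.linearIndependent_iff]
    intro g hg
    have t : ∀ a b : Fin 4, ∑ i : Fin 4, g i * hackbuschTensor ![a, b, i] = 0 := by
      intro a b
      have h0 : Matrix.trace (M₁ a * M₂ b * (∑ i : Fin 4, g i • M₃ i)) = 0 := by
        rw [hg]; simp
      rw [Finset.mul_sum, Matrix.trace_sum] at h0
      simpa [Matrix.mul_smul, Matrix.trace_smul, smul_eq_mul, key] using h0
    intro i
    fin_cases i
    · simpa [hackbuschTensor, Fin.sum_univ_four] using t 1 2
    · simpa [hackbuschTensor, Fin.sum_univ_four] using t 2 0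
    · simpa [hackbuschTensor, Fin.sum_univ_four] using t 0 1
    · simpa [hackbuschTensor, Fin.sum_univ_four] using t 2 1
end

section
/- Proposition (Example 5.3, rank characterization): Let r, k be positive integers. A k×k complex matrix T lies in IMPS(r,k,2) if and only if T is symmetric (Tᵀ = T) and has rank at most r². -/
open Matrix

namespace ImpsAux

noncomputable section

/-- scaling constant with `cc * cc = 1/2` -/
def cc : ℂ := ((Real.sqrt 2 : ℝ) : ℂ)⁻¹

lemma cc_mul_cc : cc * cc = 1/2 := by
  rw [cc, ← mul_inv, ← Complex.ofReal_mul, Real.mul_self_sqrt (by norm_num)]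
  norm_num

variable (r : ℕ)

def al (p : Fin r × Fin r) : ℂ :=
  if p.1 = p.2 then 1/2 else if p.1 < p.2 then cc else Complex.I * cc

def be (p : Fin r × Fin r) : ℂ :=
  if p.1 = p.2 then 1/2 else if p.1 < p.2 then cc else -(Complex.I * cc)

/-- an orthonormal family (for the trace form) of `r × r` matrices -/
def Bfam (p : Fin r × Fin r) : Matrix (Fin r) (Fin r) ℂ :=
  al r p • Matrix.single p.1 p.2 1 + be r p • Matrix.single p.2 p.1 1

lemma trace_std_mul (a b c d : Fin r) :
    trace (Matrix.single a b (1:ℂ) * Matrix.single c d (1:ℂ)) =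
      if b = c ∧ d = a then 1 else 0 := by
  by_cases h : b = c
  · subst h
    rw [Matrix.single_mul_single_same]
    by_cases h2 : d = a
    · subst h2; simp
    · rw [Matrix.trace_single_eq_of_ne _ _ _ (Ne.symm h2)]
      simp [h2]
  · rw [Matrix.single_mul_single_of_ne _ _ _ _ h]
    simp [h]

lemma trace_Bfam_mul (p q : Fin r × Fin r) :
    trace (Bfam r p * Bfam r q) = if p = q then 1 else 0 := by
  obtain ⟨a, b⟩ := p
  obtain ⟨a', b'⟩ := q
  simp only [Bfam, add_mul, mul_add, smul_mul_smul_comm, trace_add, trace_smul,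
    trace_std_mul, smul_eq_mul]
  by_cases h1 : a' = a ∧ b' = b
  · obtain ⟨rfl, rfl⟩ := h1
    -- now the pair is (a', b') on both sides
    by_cases hd : a' = b'
    · subst hd; norm_num [al, be]
    · have hd' : ¬(b' = a') := fun h => hd h.symm
      simp only [hd, hd', and_self, if_false, if_true, Prod.mk.injEq, and_true, true_and,
        mul_zero, zero_add, add_zero, mul_one]
      rcases lt_trichotomy a' b' with h | h | h
      · simp only [al, be, hd, if_false, h, if_true]
        linear_combination 2 * cc_mul_cc
      · exact absurd h hd
      · simp only [al, be, hd, if_false, lt_asymm h, if_true]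
        linear_combination (-2 * (cc*cc)) * Complex.I_sq + 2 * cc_mul_cc
  · by_cases h2 : a' = b ∧ b' = a
    · obtain ⟨rfl, rfl⟩ := h2
      -- the pairs are p = (b', a') and q = (a', b')
      have hd : ¬(b' = a') := fun h => h1 ⟨h.symm, h⟩
      have hd' : ¬(a' = b') := fun h => hd h.symm
      have hne : ¬((b', a') = (a', b')) := fun h => hd (Prod.ext_iff.mp h).1
      simp only [hd, hd', hne, and_self, if_false, if_true, and_true, true_and,
        mul_zero, zero_add, add_zero, mul_one]
      rcases lt_trichotomy a' b' with h | h | h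
      · simp only [al, be, hd, hd', if_false, h, lt_asymm h, if_true]
        ring
      · exact absurd h hd'
      · simp only [al, be, hd, hd', if_false, h, lt_asymm h, if_true]
        ring
    · have c1 : ¬(b = a' ∧ b' = a) := fun hx => h2 ⟨hx.1.symm, hx.2⟩
      have c2 : ¬(b = b' ∧ a' = a) := fun hx => h1 ⟨hx.2, hx.1.symm⟩
      have c3 : ¬(a = a' ∧ b' = b) := fun hx => h1 ⟨hx.1.symm, hx.2⟩
      have c4 : ¬(a = b' ∧ a' = b) := fun hx => h2 ⟨hx.2, hx.1.symm⟩
      have c5 : ¬((a, b) = (a', b')) := fun h =>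
        h1 ⟨(Prod.ext_iff.mp h).1.symm, (Prod.ext_iff.mp h).2.symm⟩
      simp [c1, c2, c3, c4, c5]

/-- from a symmetric factorization with inner dimension `r ^ 2`, build the matrices. -/
lemma exists_M_of_factor (k : ℕ) (C : Matrix (Fin k) (Fin (r^2)) ℂ) :
    ∃ M : Fin k → Matrix (Fin r) (Fin r) ℂ,
      ∀ i j, (C * Cᵀ) i j = trace (M i * M j) := by
  let e : Fin (r^2) ≃ Fin r × Fin r := (finCongr (pow_two r)).trans finProdFinEquiv.symm
  refine ⟨fun i => ∑ s, C i s • Bfam r (e s), fun i j => ?_⟩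
  rw [Finset.sum_mul_sum]
  rw [trace_sum]
  simp_rw [trace_sum, smul_mul_smul_comm, trace_smul, trace_Bfam_mul, smul_eq_mul,
    Equiv.apply_eq_iff_eq, mul_ite, mul_one, mul_zero, Finset.sum_ite_eq, Finset.mem_univ,
    if_true]
  simp [mul_apply]

/-- symmetric factorization of a complex symmetric matrix of rank at most `n`. -/
lemma exists_sym_factor (k n : ℕ) (T : Matrix (Fin k) (Fin k) ℂ) (hsym : Tᵀ = T)
    (hrank : T.rank ≤ n) : ∃ C : Matrix (Fin k) (Fin n) ℂ, T = C * Cᵀ := by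
  classical
  set B : LinearMap.BilinForm ℂ (Fin k → ℂ) := Matrix.toBilin' T with hB
  have hBsym : B.IsSymm := by
    rw [LinearMap.BilinForm.isSymm_def]; intro x y
    simp only [RingHom.id_apply, hB, Matrix.toBilin'_apply]
    rw [Finset.sum_comm]
    refine Finset.sum_congr rfl fun i _ => Finset.sum_congr rfl fun j _ => ?_
    have h2 : T j i = T i j := (congrFun (congrFun hsym j) i).symm
    rw [h2]; ring
  obtain ⟨v0, hv0⟩ := LinearMap.BilinForm.exists_orthogonal_basis (LinearMap.BilinForm.isSymm_iff.mp hBsym)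
  have hfr : Module.finrank ℂ (Fin k → ℂ) = k := Module.finrank_fin_fun ℂ
  let v : Module.Basis (Fin k) ℂ (Fin k → ℂ) := v0.reindex (finCongr hfr)
  have hv : ∀ i j : Fin k, i ≠ j → B (v i) (v j) = 0 := by
    intro i j hij
    have hne : (finCongr hfr).symm i ≠ (finCongr hfr).symm j := by
      intro h; exact hij (by simpa using congrArg (finCongr hfr) h)
    have := hv0 hne
    simpa [v, Module.Basis.reindex_apply] using this
  let P : Matrix (Fin k) (Fin k) ℂ := (Pi.basisFun ℂ (Fin k)).toMatrix v
  have hP : ∀ a i, P a i = v i a := fun a i => by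
    simp [P, Module.Basis.toMatrix_apply, Pi.basisFun_repr]
  haveI : Invertible P := (Pi.basisFun ℂ (Fin k)).invertibleToMatrix v
  haveI : Invertible Pᵀ := Matrix.invertibleTranspose P
  set d : Fin k → ℂ := fun i => B (v i) (v i) with hd
  have hdiag : Pᵀ * T * P = diagonal d := by
    ext i j
    have h1 : (Pᵀ * T * P) i j = ∑ a, ∑ b, v i a * T a b * v j b := by
      simp only [mul_apply, transpose_apply, Finset.sum_mul, hP]
      rw [Finset.sum_comm]
    have h2 : B (v i) (v j) = ∑ a, ∑ b, v i a * T a b * v j b :=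
      Matrix.toBilin'_apply T _ _
    rw [h1, ← h2]
    by_cases hij : i = j
    · subst hij; simp [diagonal_apply_eq, hd]
    · rw [hv i j hij, diagonal_apply_ne _ hij]
  have hcard : Fintype.card {i // d i ≠ 0} ≤ n := by
    have h3 : (diagonal d).rank ≤ T.rank := by
      rw [← hdiag]
      exact le_trans (rank_mul_le_left _ _) (rank_mul_le_right _ _)
    rw [rank_diagonal] at h3
    exact le_trans h3 hrank
  have hex : ∀ i, ∃ z : ℂ, z^2 = d i := fun i =>
    IsAlgClosed.exists_pow_nat_eq (d i) two_pos
  choose g hg using hex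
  have hsub : ∀ i, g i ≠ 0 → d i ≠ 0 := fun i h => by
    rw [← hg]; exact pow_ne_zero _ h
  have hcard2 : Fintype.card {i // g i ≠ 0} ≤ n :=
    le_trans (Fintype.card_le_of_embedding (Subtype.impEmbedding _ _ hsub)) hcard
  obtain ⟨f⟩ : Nonempty ({i // g i ≠ 0} ↪ Fin n) :=
    Function.Embedding.nonempty_of_card_le (by simpa using hcard2)
  set C₀ : Matrix (Fin k) (Fin k) ℂ := (Pᵀ)⁻¹ * diagonal g with hC₀
  have hT : T = C₀ * C₀ᵀ := by
    have hTd : (Pᵀ)⁻¹ * (Pᵀ * T * P) * P⁻¹ = T := by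
      rw [Matrix.mul_assoc Pᵀ T P, Matrix.inv_mul_cancel_left_of_invertible,
        Matrix.mul_inv_cancel_right_of_invertible]
    calc T = (Pᵀ)⁻¹ * (Pᵀ * T * P) * P⁻¹ := hTd.symm
      _ = (Pᵀ)⁻¹ * diagonal d * P⁻¹ := by rw [hdiag]
      _ = (Pᵀ)⁻¹ * (diagonal g * diagonal g) * P⁻¹ := by
            rw [diagonal_mul_diagonal]
            have hgg : (fun i => g i * g i) = d := funext fun i => by rw [← hg i]; ring
            rw [hgg]
      _ = C₀ * C₀ᵀ := by
            rw [hC₀, transpose_mul, diagonal_transpose, Matrix.transpose_nonsing_inv,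
              transpose_transpose]
            simp only [Matrix.mul_assoc]
  set χ : Fin k → ℂ := fun m => if g m ≠ 0 then (1:ℂ) else 0 with hχ
  set E : Matrix (Fin k) (Fin n) ℂ :=
    Matrix.of (fun m s => if h : g m ≠ 0 then (if f ⟨m, h⟩ = s then (1:ℂ) else 0) else 0)
      with hE
  refine ⟨C₀ * E, ?_⟩
  have hEE : E * Eᵀ = diagonal χ := by
    ext m m'
    simp only [mul_apply, transpose_apply, hE, Matrix.of_apply]
    by_cases h : g m ≠ 0
    · by_cases h' : g m' ≠ 0
      · simp only [dif_pos h, dif_pos h', ite_mul, one_mul, zero_mul]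
        rw [Finset.sum_ite_eq]
        simp only [Finset.mem_univ, if_true]
        by_cases hmm : m = m'
        · subst hmm
          simp [hχ, h]
        · have : (⟨m', h'⟩ : {i // g i ≠ 0}) ≠ ⟨m, h⟩ := fun hc =>
            hmm (by simpa using (Subtype.ext_iff.mp hc).symm)
          rw [if_neg (fun hc => this (f.injective hc)), diagonal_apply_ne _ hmm]
      · simp only [dif_neg h', mul_zero, Finset.sum_const_zero]
        by_cases hmm : m = m'
        · subst hmm; exact absurd h h'
        · rw [diagonal_apply_ne _ hmm]
    · simp only [dif_neg h, zero_mul, Finset.sum_const_zero]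
      by_cases hmm : m = m'
      · subst hmm
        rw [diagonal_apply_eq, hχ]
        simp [h]
      · rw [diagonal_apply_ne _ hmm]
  have hCdiag : C₀ * diagonal χ = C₀ := by
    rw [hC₀, Matrix.mul_assoc, diagonal_mul_diagonal]
    have hgχ : (fun m => g m * χ m) = g := by
      funext m
      by_cases h : g m = 0 <;> simp [hχ, h]
    rw [hgχ]
  calc T = C₀ * C₀ᵀ := hT
    _ = C₀ * (E * Eᵀ) * C₀ᵀ := by rw [hEE, hCdiag]
    _ = (C₀ * E) * (C₀ * E)ᵀ := by
          simp only [transpose_mul, Matrix.mul_assoc]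

end

end ImpsAux

/-- Example 5.3 (rank characterization): a `k × k` complex matrix `T` lies in
`IMPS(r,k,2)` if and only if `T` is symmetric and has rank at most `r²`. -/
theorem imps_two_iff_symmetric_and_rank_le (r k : ℕ) (hr : 0 < r) (hk : 0 < k)
    (T : Matrix (Fin k) (Fin k) ℂ) :
    (∃ M : Fin k → Matrix (Fin r) (Fin r) ℂ,
      ∀ i j : Fin k, T i j = Matrix.trace (M i * M j)) ↔
    (Tᵀ = T ∧ T.rank ≤ r ^ 2) := by
  constructor
  · rintro ⟨M, hM⟩
    constructor
    · ext i j
      rw [transpose_apply, hM, hM, Matrix.trace_mul_comm]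
    · set A : Matrix (Fin k) (Fin r × Fin r) ℂ := Matrix.of (fun i p => M i p.1 p.2) with hA
      set A' : Matrix (Fin r × Fin r) (Fin k) ℂ := Matrix.of (fun p j => M j p.2 p.1) with hA'
      have hT : T = A * A' := by
        ext i j
        rw [hM i j]
        simp [Matrix.trace, Matrix.diag, mul_apply, hA, hA', Fintype.sum_prod_type]
      rw [hT]
      refine le_trans (rank_mul_le_left A A') (le_trans (rank_le_card_width A) ?_)
      simp [pow_two]
  · rintro ⟨hsym, hrank⟩
    obtain ⟨C, hC⟩ := ImpsAux.exists_sym_factor k (r^2) T hsym hrank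
    obtain ⟨M, hM⟩ := ImpsAux.exists_M_of_factor r k C
    exact ⟨M, fun i j => by rw [hC]; exact hM i j⟩
end

section
/- Corollary (Example 5.3): For all positive integers r, k, the set IMPS(r,k,2) is a closed subset of the space of k×k complex matrices (equivalently, of the tensor space (Fin 2 → Fin k) → ℂ) with its standard topology. -/
open Matrix Module

namespace ImpsAux

variable {r k : ℕ}

noncomputable def ff (p : Fin r × Fin r) : ℂ :=
  if p.1 = p.2 then 1 else if p.1 < p.2 then 1 else -(Complex.I/2)

noncomputable def gg (p : Fin r × Fin r) : ℂ :=
  if p.1 = p.2 then 0 else if p.1 < p.2 then 1/2 else Complex.I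

noncomputable def BB (p : Fin r × Fin r) : Matrix (Fin r) (Fin r) ℂ :=
  ff p • single p.1 p.2 1 + gg p • single p.2 p.1 1

lemma trace_E_mul_E (a b c d : Fin r) :
    trace (single a b (1:ℂ) * single c d 1)
      = if b = c ∧ d = a then 1 else 0 := by
  rcases eq_or_ne b c with rfl | h
  · rw [single_mul_single_same, one_mul]
    rcases eq_or_ne d a with rfl | h'
    · simp [trace_single_eq_same]
    · simp [trace_single_eq_of_ne (h := h'.symm), h']
  · rw [single_mul_single_of_ne (h := h)]
    simp [h]

set_option maxHeartbeats 3000000 in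
lemma trace_BB_mul_BB (p q : Fin r × Fin r) :
    trace (BB p * BB q) = if p = q then 1 else 0 := by
  obtain ⟨a, b⟩ := p
  obtain ⟨c, d⟩ := q
  simp only [BB, add_mul, mul_add, smul_mul_assoc, mul_smul_comm, trace_add, trace_smul,
    smul_smul, trace_E_mul_E, smul_eq_mul, ff, gg]
  simp only [Prod.mk.injEq]
  rcases lt_trichotomy a b with hab | rfl | hab <;>
    rcases lt_trichotomy c d with hcd | rfl | hcd <;>
    split_ifs <;>
    first
      | omega
      | ring1
      | (ring_nf; rw [Complex.I_sq]; norm_num)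

/-- trace of a product as a sum over pairs -/
lemma trace_mul_eq_sum (M N : Matrix (Fin r) (Fin r) ℂ) :
    trace (M * N) = ∑ p : Fin r × Fin r, M p.1 p.2 * N p.2 p.1 := by
  rw [Fintype.sum_prod_type]
  simp [trace, mul_apply, diag]

/-- a submatrix (with arbitrary index functions) is a product of selection matrices -/
lemma submatrix_eq_mul {m : ℕ} (T : Matrix (Fin k) (Fin k) ℂ) (f g : Fin m → Fin k) :
    T.submatrix f g =
      (Matrix.of fun i l => if l = f i then (1:ℂ) else 0) * T *
        (Matrix.of fun l j => if l = g j then (1:ℂ) else 0) := by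
  ext i j
  simp [mul_apply, ite_mul, mul_ite, Finset.sum_ite_eq, Finset.sum_ite_eq']

lemma rank_submatrix_le' {m : ℕ} (T : Matrix (Fin k) (Fin k) ℂ) (f g : Fin m → Fin k) :
    (T.submatrix f g).rank ≤ T.rank := by
  rw [submatrix_eq_mul T f g]
  exact (rank_mul_le_left _ _).trans (rank_mul_le_right _ _)

lemma det_submatrix_eq_zero {n : ℕ} {T : Matrix (Fin k) (Fin k) ℂ} (h : T.rank ≤ n)
    (f g : Fin (n+1) → Fin k) : det (T.submatrix f g) = 0 := by
  by_contra hd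
  have hu : IsUnit (T.submatrix f g) :=
    (Matrix.isUnit_iff_isUnit_det _).2 (isUnit_iff_ne_zero.2 hd)
  have h1 := Matrix.rank_of_isUnit _ hu
  have h2 := rank_submatrix_le' T f g
  rw [h1, Fintype.card_fin] at h2
  omega

/-- extract a linearly independent subfamily of prescribed size -/
lemma exists_comp_linearIndependent {m : ℕ} (v : Fin k → (Fin m → ℂ)) {n : ℕ}
    (h : n ≤ finrank ℂ (Submodule.span ℂ (Set.range v))) :
    ∃ g : Fin n → Fin k, LinearIndependent ℂ (v ∘ g) := by
  obtain ⟨s, hsub, hspan, hind⟩ := exists_linearIndependent ℂ (Set.range v)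
  have hfin : s.Finite := (Set.finite_range v).subset hsub
  haveI : Fintype s := hfin.fintype
  have hcard : finrank ℂ (Submodule.span ℂ s) = s.toFinset.card :=
    finrank_span_set_eq_card hind
  have hn : n ≤ s.toFinset.card := by
    rw [← hcard, hspan]; exact h
  -- injection from Fin n into s
  have hcard' : n ≤ Fintype.card s := by
    rwa [Set.toFinset_card] at hn
  let e : s ≃ Fin (Fintype.card s) := Fintype.equivFin s
  let φ : Fin n → s := fun c => e.symm ⟨c, lt_of_lt_of_le c.isLt hcard'⟩
  have hφ : Function.Injective φ := by
    intro x y hxy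
    have := e.symm.injective hxy
    exact Fin.ext (by simpa [Fin.ext_iff] using this)
  choose g hg using fun c : Fin n => hsub (φ c).2
  refine ⟨g, ?_⟩
  have : v ∘ g = (fun x : s => (x : Fin m → ℂ)) ∘ φ := by
    funext c
    simp [Function.comp, hg]
  rw [this]
  exact hind.comp φ hφ

/-- if all (n+1)-minors vanish, the rank is at most n -/
lemma rank_le_of_minors {n : ℕ} (T : Matrix (Fin k) (Fin k) ℂ)
    (h : ∀ f g : Fin (n+1) → Fin k, det (T.submatrix f g) = 0) : T.rank ≤ n := by
  by_contra hlt
  push_neg at hlt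
  -- Stage 1: pick n+1 linearly independent rows of T
  have h1 : n + 1 ≤ finrank ℂ (Submodule.span ℂ (Set.range T)) := by
    have h' : T.rank = finrank ℂ (Submodule.span ℂ (Set.range T)) :=
      Matrix.rank_eq_finrank_span_row T
    rw [← h']
    omega
  obtain ⟨f, hf⟩ := exists_comp_linearIndependent T h1
  set B : Matrix (Fin (n+1)) (Fin k) ℂ := T.submatrix f id with hB
  have hBrow : (fun i => B i) = T ∘ f := rfl
  -- rank of B is n+1
  have hrB : B.rank = n + 1 := by
    have : B.rank = finrank ℂ (Submodule.span ℂ (Set.range B)) :=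
      Matrix.rank_eq_finrank_span_row B
    rw [this]
    have : Set.range B = Set.range (T ∘ f) := by rw [← hBrow]
    rw [this, finrank_span_eq_card hf, Fintype.card_fin]
  -- Stage 2: pick n+1 linearly independent columns of B
  have h2 : n + 1 ≤ finrank ℂ (Submodule.span ℂ (Set.range Bᵀ)) := by
    have h' : B.rank = finrank ℂ (Submodule.span ℂ (Set.range Bᵀ)) :=
      Matrix.rank_eq_finrank_span_cols B
    rw [← h']
    omega
  obtain ⟨g, hg⟩ := exists_comp_linearIndependent Bᵀ h2
  -- the square submatrix has nonzero determinant
  have hdet := h f g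
  have : ∃ u ≠ 0, (T.submatrix f g) *ᵥ u = 0 :=
    (Matrix.exists_mulVec_eq_zero_iff).2 hdet
  obtain ⟨u, hu, huv⟩ := this
  apply hu
  have := Fintype.linearIndependent_iff.mp hg u ?_
  · funext c; exact this c
  · funext i
    have : ∑ c, u c • (Bᵀ ∘ g) c i = (T.submatrix f g *ᵥ u) i := by
      simp [Matrix.mulVec, dotProduct, hB, Function.comp, mul_comm]
    calc (∑ c, u c • (Bᵀ ∘ g) c) i = ∑ c, u c • (Bᵀ ∘ g) c i := by
          simp [Finset.sum_apply]
      _ = 0 := by rw [this, huv]; rfl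

lemma eq_zero_of_rank_eq_zero {T : Matrix (Fin k) (Fin k) ℂ} (h : T.rank = 0) : T = 0 := by
  have hr : LinearMap.range T.mulVecLin = ⊥ := by
    have := h
    rw [Matrix.rank] at this
    exact Submodule.finrank_eq_zero.mp this
  ext i j
  have h1 : T.mulVec (Pi.single j 1) = 0 := by
    have : T.mulVecLin (Pi.single j 1) ∈ LinearMap.range T.mulVecLin := ⟨_, rfl⟩
    rw [hr] at this
    simpa using this
  have := congrFun h1 i
  simpa [Matrix.mulVec_single] using this

lemma exists_dot_ne_zero (T : Matrix (Fin k) (Fin k) ℂ) (hs : Tᵀ = T) (h0 : T ≠ 0) :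
    ∃ v, v ⬝ᵥ T.mulVec v ≠ 0 := by
  by_contra hv
  push_neg at hv
  apply h0
  ext i j
  have key : ∀ u w : Fin k → ℂ, u ⬝ᵥ T.mulVec w + w ⬝ᵥ T.mulVec u = 0 := by
    intro u w
    have := hv (u + w)
    simpa [Matrix.mulVec_add, add_dotProduct, dotProduct_add, hv u, hv w,
      add_assoc, add_comm, add_left_comm] using this
  have e1 : (Pi.single i 1 : Fin k → ℂ) ⬝ᵥ T.mulVec (Pi.single j 1) = T i j := by
    simp [Matrix.mulVec_single, single_dotProduct]
  have e2 : (Pi.single j 1 : Fin k → ℂ) ⬝ᵥ T.mulVec (Pi.single i 1) = T j i := by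
    simp [Matrix.mulVec_single, single_dotProduct]
  have hsym : T j i = T i j := by
    have := congrFun (congrFun hs i) j
    simpa [Matrix.transpose_apply] using this
  have := key (Pi.single i 1) (Pi.single j 1)
  rw [e1, e2, hsym] at this
  have : (2 : ℂ) * T i j = 0 := by ring_nf; ring_nf at this; linear_combination this
  simpa using this

/-- complex symmetric matrices of rank at most n factor as X Xᵀ -/
lemma takagi (n : ℕ) (T : Matrix (Fin k) (Fin k) ℂ) (hs : Tᵀ = T) (h : T.rank ≤ n) :
    ∃ X : Matrix (Fin k) (Fin n) ℂ, T = X * Xᵀ := by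
  induction n generalizing T with
  | zero =>
    refine ⟨0, ?_⟩
    have : T = 0 := eq_zero_of_rank_eq_zero (Nat.le_zero.mp h)
    rw [this]
    ext i j
    simp [mul_apply]
  | succ n ih =>
    rcases eq_or_ne T 0 with rfl | h0
    · refine ⟨0, ?_⟩; ext i j; simp [mul_apply]
    obtain ⟨v, hv⟩ := exists_dot_ne_zero T hs h0
    set c : ℂ := v ⬝ᵥ T.mulVec v with hc
    obtain ⟨s, hsq⟩ : ∃ s : ℂ, s ^ 2 = c := IsAlgClosed.exists_pow_nat_eq c two_pos
    have hs0 : s ≠ 0 := by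
      intro h'
      rw [h'] at hsq
      simp at hsq
      exact hv hsq.symm
    set w : Fin k → ℂ := s⁻¹ • T.mulVec v with hw
    set T' : Matrix (Fin k) (Fin k) ℂ := T - vecMulVec w w with hT'
    -- T' = T * S
    set S : Matrix (Fin k) (Fin k) ℂ := 1 - c⁻¹ • vecMulVec v (T.mulVec v) with hS
    have hmul : ∀ u : Fin k → ℂ, T * vecMulVec v u = vecMulVec (T.mulVec v) u := by
      intro u
      ext i j
      simp only [mul_apply, vecMulVec_apply, Matrix.mulVec, dotProduct]
      rw [Finset.sum_mul]
      congr 1; funext l; ring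
    have hww : vecMulVec w w = c⁻¹ • vecMulVec (T.mulVec v) (T.mulVec v) := by
      ext i j
      simp only [vecMulVec_apply, hw, Matrix.smul_apply, Pi.smul_apply, smul_eq_mul]
      have : c⁻¹ = s⁻¹ * s⁻¹ := by
        rw [← hsq]; field_simp
      rw [this]; ring
    have hTS : T' = T * S := by
      rw [hS, Matrix.mul_sub, Matrix.mul_one, Matrix.mul_smul, hmul, hT', hww]
    -- T' is symmetric
    have hsymT' : T'ᵀ = T' := by
      rw [hT', Matrix.transpose_sub, hs]
      congr 1
      ext i j
      simp [vecMulVec_apply, mul_comm]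
    -- T' kills v
    have hT'v : T'.mulVec v = 0 := by
      rw [hT', Matrix.sub_mulVec]
      have h1 : (vecMulVec w w) *ᵥ v = (w ⬝ᵥ v) • w := by
        ext i
        simp only [Matrix.mulVec, vecMulVec_apply, dotProduct, Pi.smul_apply,
          smul_eq_mul]
        rw [Finset.sum_mul]
        congr 1; funext l; ring
      rw [h1]
      have h2 : w ⬝ᵥ v = s := by
        rw [hw, smul_dotProduct]
        have : (T *ᵥ v) ⬝ᵥ v = c := by rw [dotProduct_comm, hc]
        rw [this, ← hsq]
        field_simp
        simp only [smul_eq_mul, one_div, pow_two]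
        rw [← mul_assoc, inv_mul_cancel₀ hs0, one_mul]
      rw [h2, hw, smul_smul, mul_inv_cancel₀ hs0, one_smul, sub_self]
    -- rank decreases
    have hrank : T'.rank ≤ n := by
      have hle : LinearMap.range T'.mulVecLin ≤ LinearMap.range T.mulVecLin := by
        rw [hTS, Matrix.mulVecLin_mul]
        exact LinearMap.range_comp_le_range _ _
      have hmem : T.mulVec v ∈ LinearMap.range T.mulVecLin := ⟨v, rfl⟩
      have hnot : T.mulVec v ∉ LinearMap.range T'.mulVecLin := by
        rintro ⟨u, hu⟩
        have : v ⬝ᵥ T'.mulVec u = c := by rw [Matrix.mulVecLin_apply] at hu; rw [hu, hc]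
        rw [Matrix.dotProduct_mulVec, ← Matrix.mulVec_transpose, hsymT', hT'v] at this
        simp [zero_dotProduct] at this
        exact hv this.symm
      have hlt : LinearMap.range T'.mulVecLin <
          LinearMap.range T'.mulVecLin ⊔ Submodule.span ℂ {T.mulVec v} := by
        refine lt_of_le_of_ne le_sup_left ?_
        intro heq
        apply hnot
        rw [heq]
        exact le_sup_right (α := Submodule ℂ (Fin k → ℂ)) (Submodule.mem_span_singleton_self _)
      have hle2 : LinearMap.range T'.mulVecLin ⊔ Submodule.span ℂ {T.mulVec v} ≤
          LinearMap.range T.mulVecLin := by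
        refine sup_le hle ?_
        rw [Submodule.span_singleton_le_iff_mem]
        exact hmem
      have := Submodule.finrank_lt_finrank_of_lt hlt
      have h3 := Submodule.finrank_mono hle2
      rw [Matrix.rank] at h ⊢
      omega
    obtain ⟨X', hX'⟩ := ih T' hsymT' hrank
    refine ⟨Matrix.of (fun i => Fin.cons (w i) (X' i)), ?_⟩
    have hT : T = vecMulVec w w + T' := by rw [hT']; abel
    rw [hT]
    ext i j
    simp only [Matrix.add_apply, vecMulVec_apply, mul_apply, Matrix.transpose_apply,
      Matrix.of_apply, Fin.sum_univ_succ, Fin.cons_zero, Fin.cons_succ]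
    congr 1
    have := congrFun (congrFun hX' i) j
    rw [this]
    simp [mul_apply]

end ImpsAux

/-- Example 5.3 (corollary): for all positive integers `r, k`, the set `IMPS(r,k,2)`
is a closed subset of the space of `k × k` complex matrices. -/
theorem imps_two_isClosed (r k : ℕ) (hr : 0 < r) (hk : 0 < k) :
    IsClosed {T : Matrix (Fin k) (Fin k) ℂ |
      ∃ M : Fin k → Matrix (Fin r) (Fin r) ℂ,
        ∀ i j : Fin k, T i j = Matrix.trace (M i * M j)} := by
  classical
  have hset : {T : Matrix (Fin k) (Fin k) ℂ |
      ∃ M : Fin k → Matrix (Fin r) (Fin r) ℂ,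
        ∀ i j : Fin k, T i j = Matrix.trace (M i * M j)} =
      {T : Matrix (Fin k) (Fin k) ℂ | (∀ i j, T i j = T j i) ∧
        ∀ f g : Fin (r*r+1) → Fin k, Matrix.det (T.submatrix f g) = 0} := by
    ext T
    constructor
    · rintro ⟨M, hM⟩
      have hsym : ∀ i j, T i j = T j i := by
        intro i j
        rw [hM i j, hM j i, Matrix.trace_mul_comm]
      refine ⟨hsym, ?_⟩
      -- T factors through an r*r dimensional space
      have hfac : T = (Matrix.of fun i (p : Fin r × Fin r) => M i p.1 p.2) *
          (Matrix.of fun (p : Fin r × Fin r) j => M j p.2 p.1) := by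
        ext i j
        rw [hM i j, ImpsAux.trace_mul_eq_sum]
        simp [Matrix.mul_apply]
      have hrank : T.rank ≤ r * r := by
        rw [hfac]
        refine (Matrix.rank_mul_le_left _ _).trans ?_
        have := Matrix.rank_le_card_width (Matrix.of fun i (p : Fin r × Fin r) => M i p.1 p.2)
        simpa [Fintype.card_prod] using this
      exact ImpsAux.det_submatrix_eq_zero hrank
    · rintro ⟨hsym, hmin⟩
      have hsymT : Tᵀ = T := by
        ext i j
        exact hsym j i
      have hrank : T.rank ≤ r * r := ImpsAux.rank_le_of_minors T hmin
      obtain ⟨X, hX⟩ := ImpsAux.takagi (r*r) T hsymT hrank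
      let e : Fin r × Fin r ≃ Fin (r * r) := finProdFinEquiv
      refine ⟨fun i => ∑ p : Fin r × Fin r, X i (e p) • ImpsAux.BB p, ?_⟩
      intro i j
      have h1 : (∑ p : Fin r × Fin r, X i (e p) • ImpsAux.BB p) *
          (∑ q : Fin r × Fin r, X j (e q) • ImpsAux.BB q) =
          ∑ p : Fin r × Fin r, ∑ q : Fin r × Fin r,
            (X i (e p) * X j (e q)) • (ImpsAux.BB p * ImpsAux.BB q) := by
        rw [Finset.sum_mul_sum]
        congr 1; funext p
        congr 1; funext q
        rw [smul_mul_assoc, mul_smul_comm, smul_smul]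
      calc T i j = (X * Xᵀ) i j := by rw [← hX]
        _ = ∑ c, X i c * X j c := by simp [Matrix.mul_apply]
        _ = ∑ p : Fin r × Fin r, X i (e p) * X j (e p) :=
            (Equiv.sum_comp e (fun c => X i c * X j c)).symm
        _ = Matrix.trace ((∑ p : Fin r × Fin r, X i (e p) • ImpsAux.BB p) *
              (∑ q : Fin r × Fin r, X j (e q) • ImpsAux.BB q)) := by
            rw [h1, Matrix.trace_sum]
            simp only [Matrix.trace_sum, Matrix.trace_smul, ImpsAux.trace_BB_mul_BB,
              smul_eq_mul, mul_ite, mul_one, mul_zero]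
            rw [Finset.sum_congr rfl (fun p _ => Finset.sum_ite_eq Finset.univ p
              (fun q => X i (e p) * X j (e q)))]
            simp
  rw [hset]
  have : {T : Matrix (Fin k) (Fin k) ℂ | (∀ i j, T i j = T j i) ∧
        ∀ f g : Fin (r*r+1) → Fin k, Matrix.det (T.submatrix f g) = 0} =
      (⋂ (i : Fin k) (j : Fin k), {T : Matrix (Fin k) (Fin k) ℂ | T i j = T j i}) ∩
      (⋂ (f : Fin (r*r+1) → Fin k) (g : Fin (r*r+1) → Fin k),
        {T : Matrix (Fin k) (Fin k) ℂ | Matrix.det (T.submatrix f g) = 0}) := by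
    ext T
    simp [Set.mem_iInter]
  rw [this]
  refine IsClosed.inter ?_ ?_
  · refine isClosed_iInter fun i => isClosed_iInter fun j => ?_
    exact isClosed_eq (continuous_id.matrix_elem i j) (continuous_id.matrix_elem j i)
  · refine isClosed_iInter fun f => isClosed_iInter fun g => ?_
    exact isClosed_eq ((continuous_id.matrix_submatrix f g).matrix_det) continuous_const
end

section
/- Theorem (Section 5.2): The set IMPS(2,2,3) ⊆ ((Fin 3 → Fin 2) → ℂ) equals the set of symmetric tensors; that is, a tensor T : (Fin 3 → Fin 2) → ℂ satisfies T(i_1,i_2,i_3) = trace(M_{i_1} M_{i_2} M_{i_3}) for some 2×2 complex matrices M_1, M_2 if and only if T is invariant under all permutations of its three indices: T(i_1,i_2,i_3) = T(i_{σ(1)},i_{σ(2)},i_{σ(3)}) for every permutation σ of {1,2,3}. -/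
open Matrix Polynomial

private lemma tr_cube' (A : Matrix (Fin 2) (Fin 2) ℂ) :
    trace (A * A * A) = (trace A)^3 - 3 * trace A * A.det := by
  simp [Matrix.trace, Matrix.det_fin_two, Matrix.mul_apply, Fin.sum_univ_succ]
  ring

private lemma tr_aab' (A B : Matrix (Fin 2) (Fin 2) ℂ) :
    trace (A * A * B) = trace A * trace (A * B) - A.det * trace B := by
  simp [Matrix.trace, Matrix.det_fin_two, Matrix.mul_apply, Fin.sum_univ_succ]
  ring

private lemma tr_abb' (A B : Matrix (Fin 2) (Fin 2) ℂ) :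
    trace (A * B * B) = trace B * trace (A * B) - B.det * trace A := by
  simp [Matrix.trace, Matrix.det_fin_two, Matrix.mul_apply, Fin.sum_univ_succ]
  ring

private lemma exists_inv' (tA tB dA dB tAB : ℂ) :
    ∃ A B : Matrix (Fin 2) (Fin 2) ℂ,
      trace A = tA ∧ trace B = tB ∧ A.det = dA ∧ B.det = dB ∧ trace (A * B) = tAB := by
  obtain ⟨s, hs⟩ : ∃ s : ℂ, s^2 - (tA+tB)*s + (dA+dB+tAB) = 0 := by
    obtain ⟨u, hu⟩ := IsAlgClosed.exists_pow_nat_eq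
      ((tA + tB)^2 - 4*(dA + dB + tAB)) (n := 2) (by norm_num)
    exact ⟨(tA+tB+u)/2, by linear_combination hu/4⟩
  refine ⟨!![0, -dA; 1, tA], !![tB - s, tAB + dA - tA*s; 1, s], ?_, ?_, ?_, ?_, ?_⟩
  · simp [Matrix.trace_fin_two_of]
  · rw [Matrix.trace_fin_two_of]; ring
  · rw [Matrix.det_fin_two_of]; ring
  · rw [Matrix.det_fin_two_of]; linear_combination -hs
  · rw [show (!![0, -dA; 1, tA] * !![tB - s, tAB + dA - tA*s; 1, s] :
        Matrix (Fin 2) (Fin 2) ℂ) = _ from Matrix.mul_fin_two _ _ _ _ _ _ _ _,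
      Matrix.trace_fin_two_of]
    ring

private lemma exists_mats' (t0 t1 t2 t3 : ℂ) :
    ∃ A B : Matrix (Fin 2) (Fin 2) ℂ,
      trace (A*A*A) = t0 ∧ trace (A*A*B) = t1 ∧ trace (A*B*B) = t2 ∧ trace (B*B*B) = t3 := by
  by_cases h3 : t3 = 0
  · obtain ⟨A, B, hA, hB, hdA, hdB, hAB⟩ := exists_inv' 1 0 ((1-t0)/3) (-t2) t1
    refine ⟨A, B, ?_, ?_, ?_, ?_⟩
    · rw [tr_cube', hA, hdA]; ring
    · rw [tr_aab', hA, hAB, hdA, hB]; ring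
    · rw [tr_abb', hB, hAB, hdB, hA]; ring
    · rw [tr_cube', hB, hdB, h3]; ring
  by_cases h0 : t0 = 0
  · obtain ⟨A, B, hA, hB, hdA, hdB, hAB⟩ := exists_inv' 0 1 (-t1) ((1-t3)/3) t2
    refine ⟨A, B, ?_, ?_, ?_, ?_⟩
    · rw [tr_cube', hA, hdA, h0]; ring
    · rw [tr_aab', hA, hAB, hdA, hB]; ring
    · rw [tr_abb', hB, hAB, hdB, hA]; ring
    · rw [tr_cube', hB, hdB]; ring
  obtain ⟨s, hsroot⟩ := IsAlgClosed.exists_root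
      (C t3 * X^3 + C (-(3*t2)) * X^2 + C (3*t1) * X + C (-t0))
      (by rw [Polynomial.degree_cubic h3]; decide)
  have hroot : t3*s^3 - 3*t2*s^2 + 3*t1*s - t0 = 0 := by
    have h := hsroot
    simp [Polynomial.IsRoot] at h
    linear_combination h
  have hs0 : s ≠ 0 := by
    rintro rfl
    apply h0
    linear_combination -hroot
  obtain ⟨A, B, hA, hB, hdA, hdB, hAB⟩ :=
    exists_inv' s 1 ((s^3 - t0)/(3*s)) ((1-t3)/3) ((t1 + (s^3 - t0)/(3*s))/s)
  refine ⟨A, B, ?_, ?_, ?_, ?_⟩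
  · rw [tr_cube', hA, hdA]; field_simp; ring
  · rw [tr_aab', hA, hAB, hdA, hB]; field_simp; ring
  · rw [tr_abb', hB, hAB, hdB, hA]; field_simp; linear_combination hroot
  · rw [tr_cube', hB, hdB]; ring

private lemma fin_two_cases' (a : Fin 2) : a = 0 ∨ a = 1 := by omega

/-- Section 5.2: `IMPS(2,2,3)` equals the set of symmetric tensors in `(ℂ²)^{⊗3}`:
a tensor `T : (Fin 3 → Fin 2) → ℂ` is of the form
`T(i₁,i₂,i₃) = trace(M_{i₁} M_{i₂} M_{i₃})` for some `2 × 2` complex matrices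
`M₁, M₂` if and only if `T` is invariant under all permutations of its three
indices. -/
theorem imps_two_two_three_eq_symmetric_tensors (T : (Fin 3 → Fin 2) → ℂ) :
    (∃ M : Fin 2 → Matrix (Fin 2) (Fin 2) ℂ,
      ∀ i : Fin 3 → Fin 2, T i = Matrix.trace (M (i 0) * M (i 1) * M (i 2))) ↔
    (∀ (σ : Equiv.Perm (Fin 3)) (i : Fin 3 → Fin 2), T (i ∘ σ) = T i) := by
  constructor
  · rintro ⟨M, hM⟩ σ i
    set F : ℕ → ℂ := fun k =>
      if k = 0 then trace (M 0 * M 0 * M 0) else if k = 1 then trace (M 0 * M 0 * M 1)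
      else if k = 2 then trace (M 0 * M 1 * M 1) else trace (M 1 * M 1 * M 1) with hF
    have key : ∀ a b c : Fin 2, trace (M a * M b * M c) = F ((a : ℕ) + (b : ℕ) + (c : ℕ)) := by
      intro a b c
      rcases fin_two_cases' a with rfl | rfl <;> rcases fin_two_cases' b with rfl | rfl <;>
        rcases fin_two_cases' c with rfl | rfl <;> simp only [hF] <;> norm_num
      all_goals try rw [Matrix.trace_mul_cycle]
      all_goals try rw [Matrix.trace_mul_cycle]
    have hsum : ((i (σ 0) : ℕ) + (i (σ 1) : ℕ) + (i (σ 2) : ℕ))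
        = ((i 0 : ℕ) + (i 1 : ℕ) + (i 2 : ℕ)) := by
      have h := Equiv.sum_comp σ (fun j => ((i j : ℕ)))
      simpa [Fin.sum_univ_three] using h
    calc T (i ∘ σ) = trace (M (i (σ 0)) * M (i (σ 1)) * M (i (σ 2))) := hM (i ∘ σ)
      _ = F ((i (σ 0) : ℕ) + (i (σ 1) : ℕ) + (i (σ 2) : ℕ)) := key _ _ _
      _ = F ((i 0 : ℕ) + (i 1 : ℕ) + (i 2 : ℕ)) := by rw [hsum]
      _ = trace (M (i 0) * M (i 1) * M (i 2)) := (key _ _ _).symm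
      _ = T i := (hM i).symm
  · intro h
    obtain ⟨A, B, h0, h1, h2, h3⟩ :=
      exists_mats' (T ![0,0,0]) (T ![0,0,1]) (T ![0,1,1]) (T ![1,1,1])
    refine ⟨![A, B], ?_⟩
    have key : ∀ a b c : Fin 2, T ![a,b,c] = trace (![A,B] a * ![A,B] b * ![A,B] c) := by
      intro a b c
      rcases fin_two_cases' a with rfl | rfl <;> rcases fin_two_cases' b with rfl | rfl <;>
        rcases fin_two_cases' c with rfl | rfl <;>
        simp only [Matrix.cons_val_zero, Matrix.cons_val_one, Matrix.head_cons]
      · exact h0.symm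
      · exact h1.symm
      · rw [Matrix.trace_mul_cycle, h1]
        have hp := h (Equiv.swap 1 2) ![0,0,1]
        rwa [show ((![0,0,1] : Fin 3 → Fin 2) ∘ (Equiv.swap 1 2)) = ![0,1,0] from by decide] at hp
      · exact h2.symm
      · rw [Matrix.trace_mul_cycle, Matrix.trace_mul_cycle, h1]
        have hp := h (Equiv.swap 0 2) ![0,0,1]
        rwa [show ((![0,0,1] : Fin 3 → Fin 2) ∘ (Equiv.swap 0 2)) = ![1,0,0] from by decide] at hp
      · rw [Matrix.trace_mul_cycle, Matrix.trace_mul_cycle, h2]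
        have hp := h (Equiv.swap 0 1) ![0,1,1]
        rwa [show ((![0,1,1] : Fin 3 → Fin 2) ∘ (Equiv.swap 0 1)) = ![1,0,1] from by decide] at hp
      · rw [Matrix.trace_mul_cycle, h2]
        have hp := h (Equiv.swap 0 2) ![0,1,1]
        rwa [show ((![0,1,1] : Fin 3 → Fin 2) ∘ (Equiv.swap 0 2)) = ![1,1,0] from by decide] at hp
      · exact h3.symm
    intro i
    have hi : i = ![i 0, i 1, i 2] := by funext j; fin_cases j <;> rfl
    calc T i = T ![i 0, i 1, i 2] := by rw [← hi]
      _ = trace (![A,B] (i 0) * ![A,B] (i 1) * ![A,B] (i 2)) := key _ _ _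
end

section
/- Corollary (Section 5.2): The set IMPS(2,2,3) is a closed subset of the tensor space (Fin 3 → Fin 2) → ℂ with its standard topology; indeed it is a 4-dimensional linear subspace (the space of symmetric tensors). -/
open Matrix Polynomial

private lemma trace_formulas (m f g n h k : ℂ) :
    Matrix.trace (!![m,f;g,0] * !![m,f;g,0] * !![m,f;g,0]) = m^3 + 3*m*f*g ∧
    Matrix.trace (!![m,f;g,0] * !![m,f;g,0] * !![n,h;k,0]) = n*m^2 + n*f*g + m*f*k + m*g*h ∧
    Matrix.trace (!![m,f;g,0] * !![n,h;k,0] * !![n,h;k,0]) = m*n^2 + m*h*k + n*h*g + n*k*f ∧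
    Matrix.trace (!![n,h;k,0] * !![n,h;k,0] * !![n,h;k,0]) = n^3 + 3*n*h*k := by
  refine ⟨?_, ?_, ?_, ?_⟩ <;>
    simp [Matrix.mul_fin_two, Matrix.trace_fin_two_of] <;> ring

/-- Every `(w,x,y,z) ∈ ℂ⁴` is realized as `(tr A³, tr A²B, tr AB², tr B³)`. -/
private lemma exists_mats (w x y z : ℂ) :
    ∃ A B : Matrix (Fin 2) (Fin 2) ℂ,
      Matrix.trace (A*A*A) = w ∧ Matrix.trace (A*A*B) = x ∧
      Matrix.trace (A*B*B) = y ∧ Matrix.trace (B*B*B) = z := by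
  by_cases h0 : w = 0 ∧ x = 0 ∧ y = 0
  · obtain ⟨rfl, rfl, rfl⟩ := h0
    obtain ⟨h1, h2, h3, h4⟩ := trace_formulas 0 0 0 1 1 ((z-1)/3)
    refine ⟨!![0,0;0,0], !![1,1;(z-1)/3,0], ?_, ?_, ?_, ?_⟩
    · linear_combination h1
    · linear_combination h2
    · linear_combination h3
    · linear_combination h4
  · -- the cubic w U³ + 3x U² + 3y U + z has a root u0
    have hroot : ∃ u0 : ℂ, w*u0^3 + 3*x*u0^2 + 3*y*u0 + z = 0 := by
      set P : Polynomial ℂ := C w * X^3 + C (3*x) * X^2 + C (3*y) * X + C z with hP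
      have hc3 : P.coeff 3 = w := by
        simp only [hP, coeff_add, coeff_C_mul, coeff_X_pow, coeff_X, coeff_C]
        norm_num
      have hc2 : P.coeff 2 = 3*x := by
        simp only [hP, coeff_add, coeff_C_mul, coeff_X_pow, coeff_X, coeff_C]
        norm_num
      have hc1 : P.coeff 1 = 3*y := by
        simp only [hP, coeff_add, coeff_C_mul, coeff_X_pow, coeff_X, coeff_C]
        norm_num
      have hdeg : 0 < P.degree := by
        rw [← Polynomial.natDegree_pos_iff_degree_pos]
        by_cases hw : w ≠ 0
        · have := le_natDegree_of_ne_zero (n := 3) (p := P) (by rwa [hc3]); omega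
        · by_cases hx : x ≠ 0
          · have := le_natDegree_of_ne_zero (n := 2) (p := P)
              (by rw [hc2]; exact mul_ne_zero (by norm_num) hx)
            omega
          · have hy : y ≠ 0 := by
              push_neg at h0 hw hx
              exact h0 hw hx
            have := le_natDegree_of_ne_zero (n := 1) (p := P)
              (by rw [hc1]; exact mul_ne_zero (by norm_num) hy)
            omega
      obtain ⟨u0, hu0⟩ := Complex.exists_root hdeg
      refine ⟨u0, ?_⟩
      simp only [IsRoot, hP, eval_add, eval_mul, eval_pow, eval_C, eval_X] at hu0
      linear_combination hu0
    obtain ⟨u0, hu0⟩ := hroot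
    have hfac : ∃ a2 a3 b2 b3 : ℂ, a2*a3 = (w-1)/3 ∧
        a2*b3 + a3*b2 = x + u0 + u0*((w-1)/3) ∧
        b2*b3 = y - u0^2 + u0*(x + u0 + u0*((w-1)/3)) := by
      set q0 : ℂ := (w-1)/3 with hq0
      set q1 : ℂ := x + u0 + u0*q0 with hq1
      set q2 : ℂ := y - u0^2 + u0*q1 with hq2
      by_cases hq : q0 = 0
      · exact ⟨0, q1, 1, q2, by rw [hq]; ring, by ring, by ring⟩
      · obtain ⟨δ, hδ⟩ := IsAlgClosed.exists_pow_nat_eq (q1^2 - 4*q0*q2) (n := 2) (by norm_num)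
        refine ⟨q0, 1, (q1+δ)/2, (q1-δ)/(2*q0), by ring, ?_, ?_⟩
        · field_simp
          ring
        · field_simp
          linear_combination -hδ
    obtain ⟨a2, a3, b2, b3, hf0, hf1, hf2⟩ := hfac
    obtain ⟨h1, h2, h3, h4⟩ := trace_formulas 1 a2 a3 (-u0) b2 b3
    refine ⟨!![1,a2;a3,0], !![-u0,b2;b3,0], ?_, ?_, ?_, ?_⟩
    · linear_combination h1 + 3*hf0
    · linear_combination h2 + hf1 - u0*hf0
    · linear_combination h3 + hf2 - u0*hf1
    · linear_combination h4 - 3*u0*hf2 - hu0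

private def cnt (i : Fin 3 → Fin 2) : Fin 4 :=
  ⟨(i 0).1 + (i 1).1 + (i 2).1, by omega⟩

private def Lmap : (Fin 4 → ℂ) →ₗ[ℂ] ((Fin 3 → Fin 2) → ℂ) where
  toFun c := fun i => c (cnt i)
  map_add' _ _ := rfl
  map_smul' _ _ := rfl

private lemma Lmap_apply (c : Fin 4 → ℂ) (i : Fin 3 → Fin 2) : Lmap c i = c (cnt i) := rfl

private lemma Lmap_inj : Function.Injective Lmap := by
  intro c c' h
  funext k
  fin_cases k
  · have := congrFun h (fun _ => 0)
    simpa [Lmap_apply, cnt] using this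
  · have := congrFun h (fun j => if j = 0 then 1 else 0)
    simpa [Lmap_apply, cnt] using this
  · have := congrFun h (fun j => if j = 2 then 0 else 1)
    simpa [Lmap_apply, cnt] using this
  · have := congrFun h (fun _ => 1)
    simpa [Lmap_apply, cnt] using this

/-- Section 5.2 (corollary): `IMPS(2,2,3)` is a closed subset of the tensor space
`(Fin 3 → Fin 2) → ℂ`; indeed it is a 4-dimensional linear subspace (the space of
symmetric tensors). -/
theorem imps_two_two_three_isClosed :
    IsClosed {T : (Fin 3 → Fin 2) → ℂ |
      ∃ M : Fin 2 → Matrix (Fin 2) (Fin 2) ℂ,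
        ∀ i : Fin 3 → Fin 2, T i = Matrix.trace (M (i 0) * M (i 1) * M (i 2))} ∧
    ∃ U : Submodule ℂ ((Fin 3 → Fin 2) → ℂ),
      (U : Set ((Fin 3 → Fin 2) → ℂ)) =
        {T : (Fin 3 → Fin 2) → ℂ |
          ∃ M : Fin 2 → Matrix (Fin 2) (Fin 2) ℂ,
            ∀ i : Fin 3 → Fin 2, T i = Matrix.trace (M (i 0) * M (i 1) * M (i 2))} ∧
      Module.finrank ℂ U = 4 := by
  have hset : ((LinearMap.range Lmap : Submodule ℂ ((Fin 3 → Fin 2) → ℂ)) :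
      Set ((Fin 3 → Fin 2) → ℂ)) =
      {T : (Fin 3 → Fin 2) → ℂ |
        ∃ M : Fin 2 → Matrix (Fin 2) (Fin 2) ℂ,
          ∀ i : Fin 3 → Fin 2, T i = Matrix.trace (M (i 0) * M (i 1) * M (i 2))} := by
    ext T
    simp only [SetLike.mem_coe, LinearMap.mem_range, Set.mem_setOf_eq]
    constructor
    · rintro ⟨c, rfl⟩
      obtain ⟨A, B, h1, h2, h3, h4⟩ := exists_mats (c 0) (c 1) (c 2) (c 3)
      refine ⟨![A, B], fun i => ?_⟩
      rw [Lmap_apply]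
      have e0 : i 0 = 0 ∨ i 0 = 1 := by omega
      have e1 : i 1 = 0 ∨ i 1 = 1 := by omega
      have e2 : i 2 = 0 ∨ i 2 = 1 := by omega
      rcases e0 with e0 | e0 <;> rcases e1 with e1 | e1 <;> rcases e2 with e2 | e2 <;>
        simp only [cnt, e0, e1, e2, Fin.val_zero, Fin.val_one, Matrix.cons_val_zero,
          Matrix.cons_val_one, Matrix.head_cons]
      · rw [h1]; exact congrArg c (Fin.ext rfl)
      · rw [h2]; exact congrArg c (Fin.ext rfl)
      · rw [Matrix.trace_mul_cycle A B A, h2]; exact congrArg c (Fin.ext rfl)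
      · rw [h3]; exact congrArg c (Fin.ext rfl)
      · rw [Matrix.trace_mul_cycle B A A, Matrix.trace_mul_cycle A B A, h2]
        exact congrArg c (Fin.ext rfl)
      · rw [Matrix.trace_mul_cycle B A B, Matrix.trace_mul_cycle B B A, h3]
        exact congrArg c (Fin.ext rfl)
      · rw [Matrix.trace_mul_cycle B B A, h3]; exact congrArg c (Fin.ext rfl)
      · rw [h4]; exact congrArg c (Fin.ext rfl)
    · rintro ⟨M, hM⟩
      refine ⟨fun k => if k = 0 then Matrix.trace (M 0 * M 0 * M 0)
        else if k = 1 then Matrix.trace (M 0 * M 0 * M 1)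
        else if k = 2 then Matrix.trace (M 0 * M 1 * M 1)
        else Matrix.trace (M 1 * M 1 * M 1), ?_⟩
      funext i
      rw [Lmap_apply, hM i]
      have e0 : i 0 = 0 ∨ i 0 = 1 := by omega
      have e1 : i 1 = 0 ∨ i 1 = 1 := by omega
      have e2 : i 2 = 0 ∨ i 2 = 1 := by omega
      rcases e0 with e0 | e0 <;> rcases e1 with e1 | e1 <;> rcases e2 with e2 | e2 <;>
        simp only [cnt, e0, e1, e2, Fin.val_zero, Fin.val_one] <;>
        norm_num [Fin.ext_iff]
      · rw [Matrix.trace_mul_cycle (M 0) (M 1) (M 0)]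
      · rw [Matrix.trace_mul_cycle (M 1) (M 0) (M 0),
          Matrix.trace_mul_cycle (M 0) (M 1) (M 0)]
      · rw [Matrix.trace_mul_cycle (M 1) (M 0) (M 1),
          Matrix.trace_mul_cycle (M 1) (M 1) (M 0)]
      · rw [Matrix.trace_mul_cycle (M 1) (M 1) (M 0)]
  constructor
  · rw [← hset]
    exact Submodule.closed_of_finiteDimensional _
  · refine ⟨LinearMap.range Lmap, hset, ?_⟩
    rw [LinearMap.finrank_range_of_inj Lmap_inj, Module.finrank_pi]
    simp
end

section
/- Proposition (Section 5.1, Cavender–Farris–Neyman model): Let φ : ℂ⁶ → ℂ⁸ be the polynomial map (a,b,c,d,e,f) ↦ (ace+bdf, acf+bde, ade+bcf, bce+adf, bde+acf, bcf+ade, adf+bce, bdf+ace). Then the closure of the image of φ (in the standard topology on ℂ⁸, equivalently the Zariski closure) is the 4-dimensional linear subspace {(y_0,…,y_7) ∈ ℂ⁸ : y_3 = y_6, y_2 = y_5, y_1 = y_4, y_0 = y_7}. -/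
/-- The parametrization of the Cavender–Farris–Neyman (2-state Jukes–Cantor) model
for the tripod: `(a,b,c,d,e,f) ↦ (ace+bdf, acf+bde, ade+bcf, bce+adf, bde+acf,
bcf+ade, adf+bce, bdf+ace)`. -/
def cfnMap (x : Fin 6 → ℂ) : Fin 8 → ℂ :=
  let a := x 0; let b := x 1; let c := x 2; let d := x 3; let e := x 4; let f := x 5
  ![a * c * e + b * d * f, a * c * f + b * d * e,
    a * d * e + b * c * f, b * c * e + a * d * f,
    b * d * e + a * c * f, b * c * f + a * d * e,
    a * d * f + b * c * e, b * d * f + a * c * e]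

lemma cfn_eval (a b c d e f : ℂ) :
    cfnMap ![a,b,c,d,e,f] = ![a * c * e + b * d * f, a * c * f + b * d * e,
    a * d * e + b * c * f, b * c * e + a * d * f,
    b * d * e + a * c * f, b * c * f + a * d * e,
    a * d * f + b * c * e, b * d * f + a * c * e] := rfl

lemma vec8 {a0 a1 a2 a3 a4 a5 a6 a7 b0 b1 b2 b3 b4 b5 b6 b7 : ℂ}
    (h0 : a0 = b0) (h1 : a1 = b1) (h2 : a2 = b2) (h3 : a3 = b3)
    (h4 : a4 = b4) (h5 : a5 = b5) (h6 : a6 = b6) (h7 : a7 = b7) :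
    ![a0,a1,a2,a3,a4,a5,a6,a7] = ![b0,b1,b2,b3,b4,b5,b6,b7] := by
  subst h0 h1 h2 h3 h4 h5 h6 h7; rfl

set_option maxHeartbeats 1600000 in
lemma cfn_aux (p q r s : ℂ)
    (h1 : p+q+r+s ≠ 0) (h2 : p+q-r-s ≠ 0) (h3 : p-q+r-s ≠ 0) (h4 : p-q-r+s ≠ 0) :
    ∃ x, cfnMap x = ![p, q, r, s, q, r, s, p] := by
  obtain ⟨z, hz⟩ := IsAlgClosed.exists_pow_nat_eq ((p+q+r+s)*(p+q-r-s)*(p-q+r-s)/(p-q-r+s)) zero_lt_two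
  have hz0 : z ≠ 0 := by
    intro h
    rw [h, zero_pow (by norm_num), eq_comm, div_eq_zero_iff] at hz
    rcases hz with h | h
    · rcases mul_eq_zero.1 h with h | h
      · rcases mul_eq_zero.1 h with h | h
        · exact h1 h
        · exact h2 h
      · exact h3 h
    · exact h4 h
  have hz2 : z^2 * (p-q-r+s) = (p+q+r+s)*(p+q-r-s)*(p-q+r-s) := by
    rw [hz]; field_simp
  refine ⟨![((p+q+r+s)+z)/2, ((p+q+r+s)-z)/2, (1+(p+q-r-s)/z)/2, (1-(p+q-r-s)/z)/2,
          (1+(p-q+r-s)/z)/2, (1-(p-q+r-s)/z)/2], ?_⟩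
  rw [cfn_eval]
  apply vec8 <;> field_simp <;>
    first
      | linear_combination (-2) * hz2
      | linear_combination 2 * hz2

/-- Section 5.1 (Cavender–Farris–Neyman model): the closure of the image of the
CFN parametrization `φ : ℂ⁶ → ℂ⁸` is the 4-dimensional linear subspace
`{y ∈ ℂ⁸ : y₃ = y₆, y₂ = y₅, y₁ = y₄, y₀ = y₇}`. -/
theorem closure_image_cfnMap :
    closure (Set.range cfnMap) =
      {y : Fin 8 → ℂ | y 3 = y 6 ∧ y 2 = y 5 ∧ y 1 = y 4 ∧ y 0 = y 7} := by
  apply subset_antisymm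
  · apply closure_minimal
    · rintro _ ⟨x, rfl⟩
      exact ⟨add_comm _ _, add_comm _ _, add_comm _ _, add_comm _ _⟩
    · simp only [Set.setOf_and]
      exact ((isClosed_eq (continuous_apply 3) (continuous_apply 6)).inter
        ((isClosed_eq (continuous_apply 2) (continuous_apply 5)).inter
        ((isClosed_eq (continuous_apply 1) (continuous_apply 4)).inter
        (isClosed_eq (continuous_apply 0) (continuous_apply 7)))))
  · rintro y ⟨e36, e25, e14, e07⟩
    have hB : (({-(y 0+y 1+y 2+y 3), -(y 0+y 1-y 2-y 3), -(y 0-y 1+y 2-y 3),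
        -(y 0-y 1-y 2+y 3)} : Set ℂ)).Countable :=
      (((Set.finite_singleton _).insert _).insert _ |>.insert _).countable
    have hdense : Dense (({-(y 0+y 1+y 2+y 3), -(y 0+y 1-y 2-y 3), -(y 0-y 1+y 2-y 3),
        -(y 0-y 1-y 2+y 3)} : Set ℂ))ᶜ := hB.dense_compl ℂ
    set g : ℂ → (Fin 8 → ℂ) :=
      fun t => ![y 0 + t, y 1, y 2, y 3, y 1, y 2, y 3, y 0 + t] with hg
    have hgc : Continuous g := by
      apply continuous_pi
      intro i
      fin_cases i
      exacts [continuous_const.add continuous_id, continuous_const, continuous_const,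
        continuous_const, continuous_const, continuous_const, continuous_const,
        continuous_const.add continuous_id]
    have hrange : g '' (({-(y 0+y 1+y 2+y 3), -(y 0+y 1-y 2-y 3), -(y 0-y 1+y 2-y 3),
        -(y 0-y 1-y 2+y 3)} : Set ℂ))ᶜ ⊆ Set.range cfnMap := by
      rintro _ ⟨t, ht, rfl⟩
      simp only [Set.mem_compl_iff, Set.mem_insert_iff, Set.mem_singleton_iff, not_or] at ht
      obtain ⟨h1, h2, h3, h4⟩ := ht
      obtain ⟨x, hx⟩ := cfn_aux (y 0 + t) (y 1) (y 2) (y 3)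
        (fun h => h1 (by linear_combination h))
        (fun h => h2 (by linear_combination h))
        (fun h => h3 (by linear_combination h))
        (fun h => h4 (by linear_combination h))
      exact ⟨x, hx⟩
    have hy0 : y = g 0 := by
      funext i
      fin_cases i
      exacts [(add_zero _).symm, rfl, rfl, rfl, e14.symm, e25.symm, e36.symm,
        e07.symm.trans (add_zero _).symm]
    have : g 0 ∈ closure (Set.range cfnMap) :=
      closure_mono hrange (image_closure_subset_closure_image hgc ⟨0, hdense 0, rfl⟩)
    rw [hy0]
    exact this
end
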